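/- arXiv:1210.7577 — 2 statements merged into one kernel-verified Lean document; each statement's English description precedes it below -/
import Mathlib

section
/- Let A be a cohomological, weakly additive, and weakly topologically invariant Mackey functor, U a smooth affine curve over k, D an effective divisor on U viewed as a closed subscheme ι_D : D → U finite over k. Then for every a ∈ A(U), the evaluation a(D) (defined pointwise via ∑ n_x Cor_{k(x)/k} ι_x^*a) equals Cor_{D/k}(ι_D^* a), the transfer from A(D) to A(k) applied to the restriction of a. -/
/-- A (continuous) Mackey functor on affine `k`-schemes, i.e. on commutative `k`-algebras,
with contravariant maps `res` (restriction, `A^*`) along all morphisms and covariant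
transfer maps `tr` (`A_*`, `Cor`) along (finite flat) morphisms.  Note that `res` goes in
the ring direction, i.e. `A^*(Spec S → Spec R) : A(R) → A(S)` for a `k`-algebra map
`R → S`. -/
structure MackeyFunctor (k : Type) [Field k] : Type 1 where
  obj : (R : Type) → [CommRing R] → [Algebra k R] → Type
  addCommGroup : (R : Type) → [CommRing R] → [Algebra k R] → AddCommGroup (obj R)
  res : {R S : Type} → [CommRing R] → [CommRing S] → [Algebra k R] → [Algebra k S] →
      (R →ₐ[k] S) → @AddMonoidHom (obj R) (obj S)
        (by exact (addCommGroup R).toAddMonoid.toAddZeroClass.toAddZero)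
        (by exact (addCommGroup S).toAddMonoid.toAddZeroClass.toAddZero)
  tr : {R S : Type} → [CommRing R] → [CommRing S] → [Algebra k R] → [Algebra k S] →
      (R →ₐ[k] S) → @AddMonoidHom (obj S) (obj R)
        (by exact (addCommGroup S).toAddMonoid.toAddZeroClass.toAddZero)
        (by exact (addCommGroup R).toAddMonoid.toAddZeroClass.toAddZero)

attribute [instance] MackeyFunctor.addCommGroup

namespace MackeyFunctor

variable {k : Type} [Field k]

/-- Functoriality axioms for a Mackey functor. -/
structure IsMackey (M : MackeyFunctor k) : Prop where
  res_id : ∀ (R : Type) [CommRing R] [Algebra k R] (a : M.obj R),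
    M.res (AlgHom.id k R) a = a
  tr_id : ∀ (R : Type) [CommRing R] [Algebra k R] (a : M.obj R),
    M.tr (AlgHom.id k R) a = a
  res_comp : ∀ {R S T : Type} [CommRing R] [CommRing S] [CommRing T]
      [Algebra k R] [Algebra k S] [Algebra k T] (f : R →ₐ[k] S) (g : S →ₐ[k] T)
      (a : M.obj R), M.res (g.comp f) a = M.res g (M.res f a)
  tr_comp : ∀ {R S T : Type} [CommRing R] [CommRing S] [CommRing T]
      [Algebra k R] [Algebra k S] [Algebra k T] (f : R →ₐ[k] S) (g : S →ₐ[k] T)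
      (a : M.obj T), M.tr (g.comp f) a = M.tr f (M.tr g a)

/-- `A` is cohomological: for a finite flat morphism of constant degree `d`
(encoded as: `S` is a free `R`-module of rank `d`), `A_*(f) ∘ A^*(f) = d`. -/
def Cohomological (M : MackeyFunctor k) : Prop :=
  ∀ (R S : Type) [CommRing R] [CommRing S] [Algebra k R] [Algebra k S]
    [Algebra R S] [IsScalarTower k R S] [Module.Free R S] (d : ℕ),
    Module.finrank R S = d →
    ∀ a : M.obj R,
      M.tr (IsScalarTower.toAlgHom k R S) (M.res (IsScalarTower.toAlgHom k R S) a) = d • a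

/-- `A` is weakly additive: for finite flat `f : X → S`, `f' : X' → S`,
`A_*(f ⊔ f') = A_*(f)∘A^*(ι) + A_*(f')∘A^*(ι')`; in ring-theoretic terms the
disjoint union `X ⊔ X'` is `Spec (B × B')`. -/
def WeaklyAdditive (M : MackeyFunctor k) : Prop :=
  ∀ (C B B' : Type) [CommRing C] [CommRing B] [CommRing B']
    [Algebra k C] [Algebra k B] [Algebra k B']
    [Algebra C B] [Algebra C B'] [IsScalarTower k C B] [IsScalarTower k C B']
    [Module.Finite C B] [Module.Flat C B] [Module.Finite C B'] [Module.Flat C B'],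
    ∀ a : M.obj (B × B'),
      M.tr (IsScalarTower.toAlgHom k C (B × B')) a =
        M.tr (IsScalarTower.toAlgHom k C B) (M.res (AlgHom.fst k B B') a) +
        M.tr (IsScalarTower.toAlgHom k C B') (M.res (AlgHom.snd k B B') a)

/-- `A` is weakly topologically invariant: for an Artinian local `F`-algebra `R` of
length `d` (encoded by `dim_F R = d · [l : F]`) with residue field `l` finite over `F`,
`A_*(p_R) = d • A_*(p_l) ∘ A^*(ι)`. -/
def WeaklyTopologicallyInvariant (M : MackeyFunctor k) : Prop :=
  ∀ (F R : Type) [Field F] [CommRing R] [Algebra k F] [Algebra k R]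
    [Algebra F R] [IsScalarTower k F R] [IsArtinianRing R] [IsLocalRing R]
    [Module.Finite F R] (d : ℕ),
    Module.finrank F R = d * Module.finrank F (R ⧸ IsLocalRing.maximalIdeal R) →
    ∀ a : M.obj R,
      M.tr (IsScalarTower.toAlgHom k F R) a =
        d • M.tr (IsScalarTower.toAlgHom k F (R ⧸ IsLocalRing.maximalIdeal R))
          (M.res (Ideal.Quotient.mkₐ k (IsLocalRing.maximalIdeal R)) a)

/-- The evaluation pairing `A(U) × Div(U) → A(k)`, `(a, D) ↦ a(D) = ∑ n_x Cor_{k(x)/k}(ι_x^* a)`,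
for `U = Spec R` a smooth affine curve (divisors are functions on closed points,
assumed finitely supported where relevant). -/
noncomputable def eval (M : MackeyFunctor k) (R : Type) [CommRing R] [Algebra k R]
    (a : M.obj R) (D : MaximalSpectrum R → ℤ) : M.obj k :=
  ∑ᶠ p : MaximalSpectrum R,
    D p • M.tr (Algebra.ofId k (R ⧸ p.asIdeal)) (M.res (Ideal.Quotient.mkₐ k p.asIdeal) a)

end MackeyFunctor

namespace MackeyFunctor

section Aux

variable {k : Type} [Field k]

/-- `IsScalarTower.toAlgHom k k X` is just `Algebra.ofId k X`. -/
theorem toAlgHom_self_eq_ofId (X : Type) [CommRing X] [Algebra k X] :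
    IsScalarTower.toAlgHom k k X = Algebra.ofId k X := by
  ext

/-- Transfer-restriction along an algebra isomorphism is the identity
(a consequence of being cohomological, with `d = 1`). -/
theorem tr_res_algEquiv (M : MackeyFunctor k) (hcoh : M.Cohomological)
    {B₁ B₂ : Type} [CommRing B₁] [CommRing B₂] [Algebra k B₁] [Algebra k B₂]
    (e : B₁ ≃ₐ[k] B₂) (x : M.obj B₁) :
    M.tr e.toAlgHom (M.res e.toAlgHom x) = x := by
  letI : Algebra B₁ B₂ := e.toRingHom.toAlgebra
  haveI : IsScalarTower k B₁ B₂ :=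
    IsScalarTower.of_algebraMap_eq (fun r => (e.commutes r).symm)
  have hbij : Function.Bijective (Algebra.linearMap B₁ B₂) := e.bijective
  let eL : B₁ ≃ₗ[B₁] B₂ := LinearEquiv.ofBijective (Algebra.linearMap B₁ B₂) hbij
  haveI : Module.Free B₁ B₂ := Module.Free.of_equiv eL
  have hrk : Module.finrank B₁ B₂ = 1 := by
    rw [← eL.finrank_eq]
    rcases subsingleton_or_nontrivial B₁ with h | h
    · exact Module.finrank_eq_of_rank_eq (by rw [rank_subsingleton]; norm_num)
    · exact Module.finrank_self B₁
  have he : IsScalarTower.toAlgHom k B₁ B₂ = e.toAlgHom := by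
    ext r; rfl
  have h := hcoh B₁ B₂ 1 hrk x
  rw [he] at h
  simpa using h

/-- Transfers to the base can be computed after transporting along a `k`-algebra
isomorphism. -/
theorem tr_ofId_congr (M : MackeyFunctor k) (hM : M.IsMackey) (hcoh : M.Cohomological)
    {B₁ B₂ : Type} [CommRing B₁] [CommRing B₂] [Algebra k B₁] [Algebra k B₂]
    (e : B₁ ≃ₐ[k] B₂) (x : M.obj B₁) :
    M.tr (Algebra.ofId k B₁) x = M.tr (Algebra.ofId k B₂) (M.res e.toAlgHom x) := by
  have h1 : (Algebra.ofId k B₂) = e.toAlgHom.comp (Algebra.ofId k B₁) := by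
    ext
  rw [h1, hM.tr_comp, tr_res_algEquiv M hcoh e x]

/-- Reformulation of weak additivity over the base field. -/
theorem tr_prod (M : MackeyFunctor k) (hadd : M.WeaklyAdditive)
    {B B' : Type} [CommRing B] [CommRing B'] [Algebra k B] [Algebra k B']
    [Module.Finite k B] [Module.Finite k B'] (x : M.obj (B × B')) :
    M.tr (Algebra.ofId k (B × B')) x =
      M.tr (Algebra.ofId k B) (M.res (AlgHom.fst k B B') x) +
      M.tr (Algebra.ofId k B') (M.res (AlgHom.snd k B B') x) := by
  haveI : Module.Flat k B := Module.Flat.of_free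
  haveI : Module.Flat k B' := Module.Flat.of_free
  have h := hadd k B B' x
  rwa [toAlgHom_self_eq_ofId, toAlgHom_self_eq_ofId, toAlgHom_self_eq_ofId] at h

/-- The transfer from the empty scheme vanishes. -/
theorem tr_ofId_eq_zero_of_subsingleton (M : MackeyFunctor k) (hM : M.IsMackey)
    (hcoh : M.Cohomological) (hadd : M.WeaklyAdditive)
    {S : Type} [CommRing S] [Algebra k S] [Subsingleton S] (x : M.obj S) :
    M.tr (Algebra.ofId k S) x = 0 := by
  haveI : Module.Finite k S := Module.Finite.of_surjective (0 : k →ₗ[k] S)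
    (fun y => ⟨0, Subsingleton.elim _ _⟩)
  let h : S →ₐ[k] S × S := (AlgHom.id k S).prod (AlgHom.id k S)
  have hbij : Function.Bijective h :=
    ⟨fun a b _ => Subsingleton.elim a b, fun y => ⟨0, Subsingleton.elim _ _⟩⟩
  let e : S ≃ₐ[k] S × S := AlgEquiv.ofBijective h hbij
  have key := tr_prod M hadd (M.res e.toAlgHom x)
  have hfst : (AlgHom.fst k S S).comp e.toAlgHom = AlgHom.id k S := by
    ext s; exact Subsingleton.elim _ _
  have hsnd : (AlgHom.snd k S S).comp e.toAlgHom = AlgHom.id k S := by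
    ext s; exact Subsingleton.elim _ _
  rw [← hM.res_comp, ← hM.res_comp, hfst, hsnd, hM.res_id] at key
  rw [← tr_ofId_congr M hM hcoh e x] at key
  have : M.tr (Algebra.ofId k S) x + 0 = M.tr (Algebra.ofId k S) x +
      M.tr (Algebra.ofId k S) x := by rw [add_zero, ← key]
  exact (add_left_cancel this).symm

end Aux
section Aux2

variable {k : Type} [Field k]

theorem quotientMulEquivQuotientProd_mk {R : Type} [CommRing R]
    (I J : Ideal R) (h : IsCoprime I J) (x : R) :
    Ideal.quotientMulEquivQuotientProd I J h (Ideal.Quotient.mk (I * J) x) =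
      (Ideal.Quotient.mk I x, Ideal.Quotient.mk J x) := by
  apply Prod.ext
  · rw [Ideal.quotientMulEquivQuotientProd_fst, Ideal.Quotient.factor_mk]
  · rw [Ideal.quotientMulEquivQuotientProd_snd, Ideal.Quotient.factor_mk]

/-- The Chinese remainder theorem as a `k`-algebra isomorphism. -/
noncomputable def crtAlgEquiv (R : Type) [CommRing R] [Algebra k R]
    (I J : Ideal R) (h : IsCoprime I J) :
    (R ⧸ I * J) ≃ₐ[k] (R ⧸ I) × (R ⧸ J) :=
  { Ideal.quotientMulEquivQuotientProd I J h with
    commutes' := fun r => by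
      show Ideal.quotientMulEquivQuotientProd I J h
        (Ideal.Quotient.mk (I * J) (algebraMap k R r)) = _
      rw [quotientMulEquivQuotientProd_mk]
      rfl }

theorem crtAlgEquiv_mk (R : Type) [CommRing R] [Algebra k R]
    (I J : Ideal R) (h : IsCoprime I J) (x : R) :
    crtAlgEquiv (k := k) R I J h (Ideal.Quotient.mk (I * J) x) =
      (Ideal.Quotient.mk I x, Ideal.Quotient.mk J x) :=
  quotientMulEquivQuotientProd_mk I J h x

theorem isLocalRing_quotient_pow {R : Type} [CommRing R] (p : Ideal R) [p.IsMaximal]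
    {n : ℕ} (hn : n ≠ 0) : IsLocalRing (R ⧸ p ^ n) := by
  have hnetop : p ^ n ≠ ⊤ := fun h =>
    Ideal.IsMaximal.ne_top ‹p.IsMaximal› (top_le_iff.mp (h ▸ Ideal.pow_le_self hn))
  haveI : Nontrivial (R ⧸ p ^ n) := Ideal.Quotient.nontrivial_iff.mpr hnetop
  have key : ∀ r : R, r ∉ p → IsUnit (Ideal.Quotient.mk (p ^ n) r) := by
    intro r hr
    obtain ⟨z, i, hi, hzi⟩ := Ideal.IsMaximal.exists_inv ‹p.IsMaximal› hr
    have h1 : Ideal.Quotient.mk (p ^ n) z * Ideal.Quotient.mk (p ^ n) r =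
        1 - Ideal.Quotient.mk (p ^ n) i := by
      rw [← map_mul, eq_sub_iff_add_eq, ← map_add, hzi, map_one]
    have hnil : IsNilpotent (Ideal.Quotient.mk (p ^ n) i) :=
      ⟨n, by rw [← map_pow, Ideal.Quotient.eq_zero_iff_mem]; exact Ideal.pow_mem_pow hi n⟩
    have hu : IsUnit (Ideal.Quotient.mk (p ^ n) z * Ideal.Quotient.mk (p ^ n) r) := by
      rw [h1]; exact hnil.isUnit_one_sub
    exact isUnit_of_mul_isUnit_right hu
  apply IsLocalRing.of_isUnit_or_isUnit_one_sub_self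
  intro x
  obtain ⟨r, rfl⟩ := Ideal.Quotient.mk_surjective x
  by_cases hr : r ∈ p
  · right
    have h1r : (1 : R) - r ∉ p := fun h => Ideal.IsMaximal.ne_top ‹p.IsMaximal›
      (Ideal.eq_top_of_isUnit_mem p (by simpa using Ideal.add_mem p h hr) isUnit_one)
    simpa using key _ h1r
  · exact Or.inl (key r hr)

end Aux2
section Aux3

variable {k : Type} [Field k]

theorem mem_ideal_of_mul_mem_pow {R : Type} [CommRing R] [IsDomain R]
    [IsDedekindDomain R] {p : Ideal R} [p.IsMaximal] (hp : p ≠ ⊥)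
    {n : ℕ} {a r : R} (ha : a ∉ p ^ (n + 1)) (h : a * r ∈ p ^ (n + 1)) : r ∈ p := by
  by_contra hr
  have hprime : Prime p := Ideal.prime_of_isPrime hp (Ideal.IsMaximal.isPrime ‹p.IsMaximal›)
  have hdvd : p ^ (n + 1) ∣ Ideal.span {r} * Ideal.span {a} := by
    rw [Ideal.span_singleton_mul_span_singleton, Ideal.dvd_iff_le,
      Ideal.span_singleton_le_iff_mem]
    exact mul_comm a r ▸ h
  have hnd : ¬ p ∣ Ideal.span {r} := by
    rw [Ideal.dvd_iff_le, Ideal.span_singleton_le_iff_mem]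
    exact hr
  have := hprime.pow_dvd_of_dvd_mul_left (n + 1) hnd hdvd
  rw [Ideal.dvd_iff_le, Ideal.span_singleton_le_iff_mem] at this
  exact ha this

theorem finite_and_finrank_quotient_pow (R : Type) [CommRing R] [IsDomain R]
    [IsDedekindDomain R] [Algebra k R] (p : Ideal R) [p.IsMaximal] (hp : p ≠ ⊥)
    [Module.Finite k (R ⧸ p)] (n : ℕ) :
    Module.Finite k (R ⧸ p ^ n) ∧
      Module.finrank k (R ⧸ p ^ n) = n * Module.finrank k (R ⧸ p) := by
  induction n with
  | zero =>
    have hsub : Subsingleton (R ⧸ p ^ 0) := by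
      rw [Ideal.Quotient.subsingleton_iff, pow_zero, Ideal.one_eq_top]
    constructor
    · exact Module.Finite.of_surjective (0 : k →ₗ[k] R ⧸ p ^ 0)
        (fun y => ⟨0, Subsingleton.elim _ _⟩)
    · rw [Module.finrank_zero_of_subsingleton, zero_mul]
  | succ n ih =>
    obtain ⟨hfin, hrank⟩ := ih
    have hle : p ^ (n + 1) ≤ p ^ n := Ideal.pow_le_pow_right (Nat.le_succ n)
    have hle' : p ^ (n + 1) ≤ Ideal.comap (AlgHom.id k R) (p ^ n) := by simpa using hle
    let π : (R ⧸ p ^ (n + 1)) →ₐ[k] R ⧸ p ^ n := Ideal.quotientMapₐ (p ^ n) (AlgHom.id k R) hle'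
    have hπmk : ∀ x : R, π (Ideal.Quotient.mk (p ^ (n + 1)) x) = Ideal.Quotient.mk (p ^ n) x :=
      fun x => rfl
    have hπs : Function.Surjective π := by
      intro y
      obtain ⟨x, rfl⟩ := Ideal.Quotient.mk_surjective y
      exact ⟨Ideal.Quotient.mk _ x, hπmk x⟩
    obtain ⟨a, han, han1⟩ := Ideal.exists_mem_pow_notMem_pow_succ p hp
      (Ideal.IsMaximal.ne_top ‹p.IsMaximal›) n
    -- the k-linear map `r ↦ a * r mod p ^ (n + 1)`
    let ψ : R →ₗ[k] R ⧸ p ^ (n + 1) :=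
      (Ideal.Quotient.mkₐ k (p ^ (n + 1))).toLinearMap.comp (LinearMap.mulLeft k a)
    have hψ : ∀ r : R, ψ r = Ideal.Quotient.mk (p ^ (n + 1)) (a * r) := fun r => rfl
    have hker : Submodule.restrictScalars k (p : Submodule R R) ≤ LinearMap.ker ψ := by
      intro r hr
      rw [LinearMap.mem_ker, hψ, Ideal.Quotient.eq_zero_iff_mem, pow_succ]
      exact Ideal.mul_mem_mul han hr
    let g : (R ⧸ p) →ₗ[k] R ⧸ p ^ (n + 1) :=
      (Submodule.liftQ _ ψ hker).comp
        (Submodule.Quotient.restrictScalarsEquiv k (p : Submodule R R)).symm.toLinearMap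
    have hg : ∀ r : R, g (Ideal.Quotient.mk p r) = Ideal.Quotient.mk (p ^ (n + 1)) (a * r) := by
      intro r
      show (Submodule.liftQ _ ψ hker)
        ((Submodule.Quotient.restrictScalarsEquiv k (p : Submodule R R)).symm
          (Submodule.Quotient.mk r)) = _
      rw [Submodule.Quotient.restrictScalarsEquiv_symm_mk, Submodule.liftQ_apply]
      exact hψ r
    have hginj : Function.Injective g := by
      rw [← LinearMap.ker_eq_bot, LinearMap.ker_eq_bot']
      intro m hm
      obtain ⟨r, rfl⟩ := Ideal.Quotient.mk_surjective m
      rw [hg, Ideal.Quotient.eq_zero_iff_mem] at hm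
      rw [Ideal.Quotient.eq_zero_iff_mem]
      exact mem_ideal_of_mul_mem_pow hp han1 hm
    have hrange : LinearMap.range g = LinearMap.ker π.toLinearMap := by
      apply le_antisymm
      · rintro - ⟨m, rfl⟩
        obtain ⟨r, rfl⟩ := Ideal.Quotient.mk_surjective m
        rw [LinearMap.mem_ker]
        show π (g (Ideal.Quotient.mk p r)) = 0
        rw [hg, hπmk, Ideal.Quotient.eq_zero_iff_mem]
        exact Ideal.mul_mem_right r _ han
      · intro m hm
        obtain ⟨x, rfl⟩ := Ideal.Quotient.mk_surjective m
        rw [LinearMap.mem_ker] at hm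
        have hx : x ∈ p ^ n := by
          rw [show π.toLinearMap (Ideal.Quotient.mk (p ^ (n + 1)) x)
            = Ideal.Quotient.mk (p ^ n) x from hπmk x, Ideal.Quotient.eq_zero_iff_mem] at hm
          exact hm
        -- `p ^ n = span {a} ⊔ p ^ (n + 1)`
        have hJ : Ideal.span {a} ⊔ p ^ (n + 1) = p ^ n := by
          apply Ideal.eq_prime_pow_of_succ_lt_of_le hp
          · refine lt_of_le_of_ne le_sup_right (fun h => han1 ?_)
            rw [h]
            exact Submodule.mem_sup_left (Ideal.mem_span_singleton_self a)
          · exact sup_le ((Ideal.span_singleton_le_iff_mem _).mpr han) hle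
        rw [← hJ] at hx
        obtain ⟨u, hu, v, hv, rfl⟩ := Submodule.mem_sup.mp hx
        obtain ⟨c, rfl⟩ := Ideal.mem_span_singleton'.mp hu
        refine ⟨Ideal.Quotient.mk p c, ?_⟩
        rw [hg]
        rw [map_add (Ideal.Quotient.mk (p ^ (n + 1)))]
        rw [Ideal.Quotient.eq_zero_iff_mem.mpr hv, add_zero, mul_comm]
    have eL : (R ⧸ p) ≃ₗ[k] LinearMap.ker π.toLinearMap :=
      (LinearEquiv.ofInjective g hginj).trans (LinearEquiv.ofEq _ _ hrange)
    haveI : IsNoetherian k (R ⧸ p ^ n) := isNoetherian_of_isNoetherianRing_of_finite k _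
    have hfin1 : Module.Finite k (R ⧸ p ^ (n + 1)) := by
      rw [Module.finite_def]
      apply Submodule.fg_of_fg_map_of_fg_inf_ker π.toLinearMap
      · exact IsNoetherian.noetherian _
      · rw [top_inf_eq, ← hrange, LinearMap.range_eq_map]
        exact (IsNoetherian.noetherian (⊤ : Submodule k (R ⧸ p))).map g
    refine ⟨hfin1, ?_⟩
    haveI := hfin1
    have hadd := LinearMap.finrank_range_add_finrank_ker π.toLinearMap
    have hrt : LinearMap.range π.toLinearMap = ⊤ := LinearMap.range_eq_top.mpr hπs
    rw [hrt, finrank_top] at hadd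
    rw [← eL.finrank_eq] at hadd
    rw [← hadd, hrank]
    ring

end Aux3
section Aux4

variable {k : Type} [Field k]

/-- Zariski's lemma: residue fields of finite type algebras are finite extensions. -/
theorem finite_residue_field (R : Type) [CommRing R] [Algebra k R]
    [Algebra.FiniteType k R] (p : Ideal R) [p.IsMaximal] :
    Module.Finite k (R ⧸ p) := by
  haveI : Algebra.FiniteType k (R ⧸ p) :=
    Algebra.FiniteType.of_surjective (Ideal.Quotient.mkₐ k p)
      (Ideal.Quotient.mkₐ_surjective k p)
  letI : Field (R ⧸ p) := Ideal.Quotient.field p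
  exact finite_of_finite_type_of_isJacobsonRing k (R ⧸ p)

/-- Lemma E: evaluation of the transfer on an infinitesimal thickening of a closed
point, via weak topological invariance. -/
theorem tr_quotient_pow (M : MackeyFunctor k) (hM : M.IsMackey) (hcoh : M.Cohomological)
    (htop : M.WeaklyTopologicallyInvariant)
    (R : Type) [CommRing R] [IsDomain R] [IsDedekindDomain R] [Algebra k R]
    [Algebra.FiniteType k R] (p : Ideal R) [p.IsMaximal] (hp : p ≠ ⊥)
    {n : ℕ} (hn : n ≠ 0) (a : M.obj R) :
    M.tr (Algebra.ofId k (R ⧸ p ^ n)) (M.res (Ideal.Quotient.mkₐ k (p ^ n)) a)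
      = n • M.tr (Algebra.ofId k (R ⧸ p)) (M.res (Ideal.Quotient.mkₐ k p) a) := by
  haveI hresfin : Module.Finite k (R ⧸ p) := finite_residue_field R p
  obtain ⟨hfinn, hrankn⟩ := finite_and_finrank_quotient_pow (k := k) R p hp n
  haveI := hfinn
  haveI hloc : IsLocalRing (R ⧸ p ^ n) := isLocalRing_quotient_pow p hn
  haveI : IsArtinianRing (R ⧸ p ^ n) :=
    isArtinian_of_tower k (inferInstance : IsArtinian k (R ⧸ p ^ n))
  let e2 : (((R ⧸ p ^ n)) ⧸ (Ideal.map (Ideal.Quotient.mkₐ k (p ^ n)) p)) ≃ₐ[k] R ⧸ p :=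
    DoubleQuot.quotQuotEquivQuotOfLEₐ k (Ideal.pow_le_self hn)
  haveI : Nontrivial (R ⧸ p) :=
    Ideal.Quotient.nontrivial_iff.mpr (Ideal.IsMaximal.ne_top ‹p.IsMaximal›)
  have hmm : Ideal.map (Ideal.Quotient.mkₐ k (p ^ n)) p
      = IsLocalRing.maximalIdeal (R ⧸ p ^ n) := by
    apply IsLocalRing.eq_maximalIdeal
    have hne : Ideal.map (Ideal.Quotient.mkₐ k (p ^ n)) p ≠ ⊤ := by
      intro h
      haveI : Subsingleton ((R ⧸ p ^ n) ⧸ Ideal.map (Ideal.Quotient.mkₐ k (p ^ n)) p) :=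
        Ideal.Quotient.subsingleton_iff.mpr h
      haveI : Subsingleton (R ⧸ p) := e2.symm.toEquiv.subsingleton
      exact not_subsingleton (R ⧸ p) ‹_›
    rcases Ideal.map_eq_top_or_isMaximal_of_surjective _
      (Ideal.Quotient.mkₐ_surjective k (p ^ n)) ‹p.IsMaximal› with h | h
    · exact absurd h hne
    · exact h
  let φ : ((R ⧸ p ^ n) ⧸ IsLocalRing.maximalIdeal (R ⧸ p ^ n)) ≃ₐ[k] R ⧸ p :=
    (Ideal.quotientEquivAlgOfEq k hmm.symm).trans e2
  have hfr : Module.finrank k (R ⧸ p ^ n)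
      = n * Module.finrank k ((R ⧸ p ^ n) ⧸ IsLocalRing.maximalIdeal (R ⧸ p ^ n)) := by
    rw [φ.toLinearEquiv.finrank_eq, hrankn]
  have h := htop k (R ⧸ p ^ n) n hfr (M.res (Ideal.Quotient.mkₐ k (p ^ n)) a)
  rw [toAlgHom_self_eq_ofId, toAlgHom_self_eq_ofId] at h
  rw [h]
  congr 1
  rw [tr_ofId_congr M hM hcoh φ]
  congr 1
  rw [← hM.res_comp, ← hM.res_comp]
  have hcompeq : (φ.toAlgHom.comp
      (Ideal.Quotient.mkₐ k (IsLocalRing.maximalIdeal (R ⧸ p ^ n)))).comp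
        (Ideal.Quotient.mkₐ k (p ^ n)) = Ideal.Quotient.mkₐ k p := by
    ext r
    show e2 ((Ideal.quotientEquivAlgOfEq k hmm.symm)
      (Ideal.Quotient.mk _ (Ideal.Quotient.mk (p ^ n) r))) = Ideal.Quotient.mk p r
    rw [Ideal.quotientEquivAlgOfEq_mk]
    show (DoubleQuot.quotQuotEquivQuotOfLEₐ k (Ideal.pow_le_self hn)) _ = Ideal.Quotient.mk p r
    rw [DoubleQuot.coe_quotQuotEquivQuotOfLEₐ]
    exact DoubleQuot.quotQuotEquivQuotOfLE_quotQuotMk r _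
  rw [hcompeq]

end Aux4
section Aux5

variable {k : Type} [Field k]

theorem ne_bot_of_not_isField {R : Type} [CommRing R] [Nontrivial R] (hR : ¬ IsField R)
    (p : Ideal R) [hp : p.IsMaximal] : p ≠ ⊥ := by
  rintro rfl
  apply hR
  refine ⟨exists_pair_ne R, mul_comm, ?_⟩
  intro x hx
  have hspan : Ideal.span {x} = ⊤ := by
    by_contra hne
    have h := hp.eq_of_le hne bot_le
    exact hx (by simpa [Ideal.span_singleton_eq_bot] using h.symm)
  obtain ⟨y, hy⟩ := (Ideal.span_singleton_eq_top.mp hspan).exists_right_inv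
  exact ⟨y, hy⟩

theorem coprime_pow_prod_pow {R : Type} [CommRing R] (n : MaximalSpectrum R → ℕ)
    (q : MaximalSpectrum R) {s : Finset (MaximalSpectrum R)} (hq : q ∉ s) :
    IsCoprime (q.asIdeal ^ n q) (∏ p ∈ s, p.asIdeal ^ n p) := by
  apply IsCoprime.prod_right
  intro p hp
  have hne : q.asIdeal ≠ p.asIdeal := by
    intro h
    exact hq (by rwa [show q = p from MaximalSpectrum.ext h])
  exact (Ideal.isCoprime_iff_sup_eq.mpr
    (Ideal.IsMaximal.coprime_of_ne q.isMaximal p.isMaximal hne)).pow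

theorem finite_quotient_pow (R : Type) [CommRing R] [IsDomain R] [IsDedekindDomain R]
    [Algebra k R] [Algebra.FiniteType k R] (hR : ¬ IsField R) (p : Ideal R)
    [p.IsMaximal] (n : ℕ) : Module.Finite k (R ⧸ p ^ n) := by
  rcases Nat.eq_zero_or_pos n with hn | hn
  · haveI : Subsingleton (R ⧸ p ^ n) := by
      rw [Ideal.Quotient.subsingleton_iff, hn, pow_zero, Ideal.one_eq_top]
    exact Module.Finite.of_surjective (0 : k →ₗ[k] _) (fun y => ⟨0, Subsingleton.elim _ _⟩)
  · haveI : Module.Finite k (R ⧸ p) := finite_residue_field R p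
    exact (finite_and_finrank_quotient_pow (k := k) R p
      (ne_bot_of_not_isField hR p) n).1

theorem finite_quotient_prod (R : Type) [CommRing R] [IsDomain R] [IsDedekindDomain R]
    [Algebra k R] [Algebra.FiniteType k R] (hR : ¬ IsField R)
    (n : MaximalSpectrum R → ℕ) (s : Finset (MaximalSpectrum R)) :
    Module.Finite k (R ⧸ ∏ p ∈ s, p.asIdeal ^ n p) := by
  classical
  induction s using Finset.induction_on with
  | empty =>
    haveI : Subsingleton (R ⧸ ∏ p ∈ (∅ : Finset (MaximalSpectrum R)), p.asIdeal ^ n p) := by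
      rw [Ideal.Quotient.subsingleton_iff, Finset.prod_empty, Ideal.one_eq_top]
    exact Module.Finite.of_surjective (0 : k →ₗ[k] _) (fun y => ⟨0, Subsingleton.elim _ _⟩)
  | @insert q s hq ih =>
    have hco := coprime_pow_prod_pow n q hq
    have heq : (∏ p ∈ insert q s, p.asIdeal ^ n p)
        = q.asIdeal ^ n q * ∏ p ∈ s, p.asIdeal ^ n p := Finset.prod_insert hq
    let e := (Ideal.quotientEquivAlgOfEq k heq).trans (crtAlgEquiv (k := k) R _ _ hco)
    haveI : Module.Finite k (R ⧸ q.asIdeal ^ n q) := finite_quotient_pow R hR q.asIdeal (n q)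
    haveI := ih
    exact Module.Finite.equiv e.symm.toLinearEquiv

theorem tr_quotient_prod (M : MackeyFunctor k) (hM : M.IsMackey) (hcoh : M.Cohomological)
    (hadd : M.WeaklyAdditive) (htop : M.WeaklyTopologicallyInvariant)
    (R : Type) [CommRing R] [IsDomain R] [IsDedekindDomain R] [Algebra k R]
    [Algebra.FiniteType k R] (hR : ¬ IsField R)
    (n : MaximalSpectrum R → ℕ) (s : Finset (MaximalSpectrum R)) (a : M.obj R) :
    M.tr (Algebra.ofId k (R ⧸ ∏ p ∈ s, p.asIdeal ^ n p))
        (M.res (Ideal.Quotient.mkₐ k (∏ p ∈ s, p.asIdeal ^ n p)) a)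
      = ∑ p ∈ s, n p • M.tr (Algebra.ofId k (R ⧸ p.asIdeal))
          (M.res (Ideal.Quotient.mkₐ k p.asIdeal) a) := by
  classical
  induction s using Finset.induction_on with
  | empty =>
    haveI : Subsingleton (R ⧸ ∏ p ∈ (∅ : Finset (MaximalSpectrum R)), p.asIdeal ^ n p) := by
      rw [Ideal.Quotient.subsingleton_iff, Finset.prod_empty, Ideal.one_eq_top]
    rw [tr_ofId_eq_zero_of_subsingleton M hM hcoh hadd, Finset.sum_empty]
  | @insert q s hq ih =>
    rw [Finset.sum_insert hq, ← ih]
    have hco := coprime_pow_prod_pow n q hq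
    have heq : (∏ p ∈ insert q s, p.asIdeal ^ n p)
        = q.asIdeal ^ n q * ∏ p ∈ s, p.asIdeal ^ n p := Finset.prod_insert hq
    let e := (Ideal.quotientEquivAlgOfEq k heq).trans (crtAlgEquiv (k := k) R _ _ hco)
    haveI : Module.Finite k (R ⧸ q.asIdeal ^ n q) := finite_quotient_pow R hR q.asIdeal (n q)
    haveI : Module.Finite k (R ⧸ ∏ p ∈ s, p.asIdeal ^ n p) := finite_quotient_prod R hR n s
    rw [tr_ofId_congr M hM hcoh e, tr_prod M hadd]
    have h1 : ((AlgHom.fst k (R ⧸ q.asIdeal ^ n q) (R ⧸ ∏ p ∈ s, p.asIdeal ^ n p)).comp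
        e.toAlgHom).comp (Ideal.Quotient.mkₐ k (∏ p ∈ insert q s, p.asIdeal ^ n p))
          = Ideal.Quotient.mkₐ k (q.asIdeal ^ n q) := by
      ext r
      show ((crtAlgEquiv (k := k) R _ _ hco)
        ((Ideal.quotientEquivAlgOfEq k heq) (Ideal.Quotient.mk _ r))).1 = _
      rw [Ideal.quotientEquivAlgOfEq_mk, crtAlgEquiv_mk]
      rfl
    have h2 : ((AlgHom.snd k (R ⧸ q.asIdeal ^ n q) (R ⧸ ∏ p ∈ s, p.asIdeal ^ n p)).comp
        e.toAlgHom).comp (Ideal.Quotient.mkₐ k (∏ p ∈ insert q s, p.asIdeal ^ n p))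
          = Ideal.Quotient.mkₐ k (∏ p ∈ s, p.asIdeal ^ n p) := by
      ext r
      show ((crtAlgEquiv (k := k) R _ _ hco)
        ((Ideal.quotientEquivAlgOfEq k heq) (Ideal.Quotient.mk _ r))).2 = _
      rw [Ideal.quotientEquivAlgOfEq_mk, crtAlgEquiv_mk]
      rfl
    rw [← hM.res_comp, ← hM.res_comp, h1, ← hM.res_comp, ← hM.res_comp, h2]
    congr 1
    rcases Nat.eq_zero_or_pos (n q) with hnq | hnq
    · haveI : Subsingleton (R ⧸ q.asIdeal ^ n q) := by
        rw [Ideal.Quotient.subsingleton_iff, hnq, pow_zero, Ideal.one_eq_top]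
      rw [tr_ofId_eq_zero_of_subsingleton M hM hcoh hadd, hnq, zero_smul]
    · exact tr_quotient_pow M hM hcoh htop R q.asIdeal
        (ne_bot_of_not_isField hR q.asIdeal) (Nat.pos_iff_ne_zero.mp hnq) a

end Aux5
/-- **Evaluation at an effective divisor is the transfer from the divisor viewed as a
closed subscheme** (Lemme 1.1).  Let `A` be a cohomological, weakly additive and weakly
topologically invariant Mackey functor, `U = Spec R` a smooth affine curve over `k`, and
`D = ∑ n_x · x` an effective divisor on `U`, viewed as the closed subscheme
`Spec (R ⧸ ∏ p^{n_p})` finite over `k`.  Then for every `a ∈ A(U)`,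
`a(D) = Cor_{D/k}(ι_D^* a)`. -/
theorem eval_effective_eq_tr_of_closed_subscheme {k : Type} [Field k]
    (M : MackeyFunctor k) (hM : M.IsMackey) (hcoh : M.Cohomological)
    (hadd : M.WeaklyAdditive) (htop : M.WeaklyTopologicallyInvariant)
    (R : Type) [CommRing R] [IsDomain R] [IsDedekindDomain R] [Algebra k R]
    [Algebra.FiniteType k R] (hR : ¬ IsField R)
    (D : MaximalSpectrum R →₀ ℕ) (a : M.obj R) :
    M.tr (Algebra.ofId k (R ⧸ ∏ p ∈ D.support, p.asIdeal ^ D p))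
        (M.res (Ideal.Quotient.mkₐ k (∏ p ∈ D.support, p.asIdeal ^ D p)) a) =
      M.eval R a (fun p => (D p : ℤ)) := by
  classical
  rw [tr_quotient_prod M hM hcoh hadd htop R hR (fun p => D p) D.support a]
  rw [MackeyFunctor.eval]
  have hsupp : (Function.support fun p : MaximalSpectrum R =>
      ((D p : ℤ)) • M.tr (Algebra.ofId k (R ⧸ p.asIdeal))
        (M.res (Ideal.Quotient.mkₐ k p.asIdeal) a)) ⊆ ↑D.support := by
    intro p hp
    simp only [Function.mem_support] at hp
    simp only [Finset.mem_coe, Finsupp.mem_support_iff]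
    intro h0
    exact hp (by rw [h0]; simp)
  rw [finsum_eq_sum_of_support_subset _ hsupp]
  apply Finset.sum_congr rfl
  intro p _
  exact (natCast_zsmul _ _).symm

end MackeyFunctor
end

section
/- Let A be a proper Mackey functor (A(O) → A(K) surjective for every k-DVR O with fraction field K). If A admits a local symbol ∂, then ∂ is unique and given by ∂_O(a, x) = v(x)·ā where ā is the reduction of any lift of a to A(O); in particular the kernel of A(O) → A(K) must map to zero in A(l), and conversely if for every henselian k-DVR O the map Ker(A(O) → A(K)) → A(l) is zero, then the formula ∂_O(a,x) = v(x)·ā defines a strong local symbol. -/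
namespace MackeyFunctor

variable {k : Type} [Field k]

/-- A local symbol for a Mackey functor `A`: for every `k`-algebra `O` which is a
discrete valuation ring, with fraction field `K` and residue field `l = O/𝔪`, a
biadditive pairing `∂_O : A(K) × K^* → A(l)` which is continuous in the second variable,
satisfies `∂_O(a, x) = v(x)·ā` for `a` coming from `A(O)` (expressed via its two special
cases: vanishing on units and the uniformizer formula), and which is compatible with
finite extensions. -/
structure LocalSymbol (M : MackeyFunctor k) where
  sym : ∀ (O : Type) [CommRing O] [IsDomain O] [IsDiscreteValuationRing O] [Algebra k O]
      (K : Type) [Field K] [Algebra O K] [IsFractionRing O K] [Algebra k K]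
      [IsScalarTower k O K],
      M.obj K → Kˣ → M.obj (O ⧸ IsLocalRing.maximalIdeal O)
  sym_add : ∀ (O : Type) [CommRing O] [IsDomain O] [IsDiscreteValuationRing O] [Algebra k O]
      (K : Type) [Field K] [Algebra O K] [IsFractionRing O K] [Algebra k K]
      [IsScalarTower k O K] (a b : M.obj K) (x : Kˣ),
      sym O K (a + b) x = sym O K a x + sym O K b x
  sym_mul : ∀ (O : Type) [CommRing O] [IsDomain O] [IsDiscreteValuationRing O] [Algebra k O]
      (K : Type) [Field K] [Algebra O K] [IsFractionRing O K] [Algebra k K]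
      [IsScalarTower k O K] (a : M.obj K) (x y : Kˣ),
      sym O K a (x * y) = sym O K a x + sym O K a y
  /-- Continuity in the second variable: `∂_O(a, -)` kills a congruence subgroup `1 + 𝔪^n`. -/
  sym_cont : ∀ (O : Type) [CommRing O] [IsDomain O] [IsDiscreteValuationRing O] [Algebra k O]
      (K : Type) [Field K] [Algebra O K] [IsFractionRing O K] [Algebra k K]
      [IsScalarTower k O K] (a : M.obj K), ∃ n : ℕ,
      ∀ u : Oˣ, (u : O) - 1 ∈ (IsLocalRing.maximalIdeal O) ^ n →
        sym O K a (Units.map (algebraMap O K : O →* K) u) = 0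
  /-- Property (ii), unit case: if `a` extends to `A(O)` then `∂_O(a, u) = 0` for `u ∈ O^×`. -/
  sym_unit : ∀ (O : Type) [CommRing O] [IsDomain O] [IsDiscreteValuationRing O] [Algebra k O]
      (K : Type) [Field K] [Algebra O K] [IsFractionRing O K] [Algebra k K]
      [IsScalarTower k O K] (a : M.obj O) (u : Oˣ),
      sym O K (M.res (IsScalarTower.toAlgHom k O K) a)
        (Units.map (algebraMap O K : O →* K) u) = 0
  /-- Property (ii), uniformizer case: if `a` extends to `A(O)` then `∂_O(a, π) = ā`. -/
  sym_unif : ∀ (O : Type) [CommRing O] [IsDomain O] [IsDiscreteValuationRing O] [Algebra k O]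
      (K : Type) [Field K] [Algebra O K] [IsFractionRing O K] [Algebra k K]
      [IsScalarTower k O K] (a : M.obj O) (π : O) (_ : Irreducible π)
      (hu : IsUnit (algebraMap O K π)),
      sym O K (M.res (IsScalarTower.toAlgHom k O K) a) hu.unit =
        M.res (Ideal.Quotient.mkₐ k (IsLocalRing.maximalIdeal O)) a

/-- A local symbol is *strong* if `∂_O` kills the principal units `U_1 = 1 + 𝔪`. -/
def LocalSymbol.Strong {M : MackeyFunctor k} (d : LocalSymbol M) : Prop :=
  ∀ (O : Type) [CommRing O] [IsDomain O] [IsDiscreteValuationRing O] [Algebra k O]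
    (K : Type) [Field K] [Algebra O K] [IsFractionRing O K] [Algebra k K]
    [IsScalarTower k O K] (a : M.obj K) (u : Oˣ),
    (u : O) - 1 ∈ IsLocalRing.maximalIdeal O →
      d.sym O K a (Units.map (algebraMap O K : O →* K) u) = 0

end MackeyFunctor

namespace MackeyFunctor

variable {k : Type} [Field k]

/-- A local symbol defined only on *henselian* `k`-discrete valuation rings, with
fraction field `K` and residue field `l`; fields as in `LocalSymbol`.
discrete valuation ring, with fraction field `K` and residue field `l = O/𝔪`, a
biadditive pairing `∂_O : A(K) × K^* → A(l)` which is continuous in the second variable,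
satisfies `∂_O(a, x) = v(x)·ā` for `a` coming from `A(O)` (expressed via its two special
cases: vanishing on units and the uniformizer formula), and which is compatible with
finite extensions. -/
structure HenselianLocalSymbol (M : MackeyFunctor k) where
  sym : ∀ (O : Type) [CommRing O] [IsDomain O] [IsDiscreteValuationRing O] [HenselianLocalRing O] [Algebra k O]
      (K : Type) [Field K] [Algebra O K] [IsFractionRing O K] [Algebra k K]
      [IsScalarTower k O K],
      M.obj K → Kˣ → M.obj (O ⧸ IsLocalRing.maximalIdeal O)
  sym_add : ∀ (O : Type) [CommRing O] [IsDomain O] [IsDiscreteValuationRing O] [HenselianLocalRing O] [Algebra k O]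
      (K : Type) [Field K] [Algebra O K] [IsFractionRing O K] [Algebra k K]
      [IsScalarTower k O K] (a b : M.obj K) (x : Kˣ),
      sym O K (a + b) x = sym O K a x + sym O K b x
  sym_mul : ∀ (O : Type) [CommRing O] [IsDomain O] [IsDiscreteValuationRing O] [HenselianLocalRing O] [Algebra k O]
      (K : Type) [Field K] [Algebra O K] [IsFractionRing O K] [Algebra k K]
      [IsScalarTower k O K] (a : M.obj K) (x y : Kˣ),
      sym O K a (x * y) = sym O K a x + sym O K a y
  /-- Continuity in the second variable: `∂_O(a, -)` kills a congruence subgroup `1 + 𝔪^n`. -/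
  sym_cont : ∀ (O : Type) [CommRing O] [IsDomain O] [IsDiscreteValuationRing O] [HenselianLocalRing O] [Algebra k O]
      (K : Type) [Field K] [Algebra O K] [IsFractionRing O K] [Algebra k K]
      [IsScalarTower k O K] (a : M.obj K), ∃ n : ℕ,
      ∀ u : Oˣ, (u : O) - 1 ∈ (IsLocalRing.maximalIdeal O) ^ n →
        sym O K a (Units.map (algebraMap O K : O →* K) u) = 0
  /-- Property (ii), unit case: if `a` extends to `A(O)` then `∂_O(a, u) = 0` for `u ∈ O^×`. -/
  sym_unit : ∀ (O : Type) [CommRing O] [IsDomain O] [IsDiscreteValuationRing O] [HenselianLocalRing O] [Algebra k O]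
      (K : Type) [Field K] [Algebra O K] [IsFractionRing O K] [Algebra k K]
      [IsScalarTower k O K] (a : M.obj O) (u : Oˣ),
      sym O K (M.res (IsScalarTower.toAlgHom k O K) a)
        (Units.map (algebraMap O K : O →* K) u) = 0
  /-- Property (ii), uniformizer case: if `a` extends to `A(O)` then `∂_O(a, π) = ā`. -/
  sym_unif : ∀ (O : Type) [CommRing O] [IsDomain O] [IsDiscreteValuationRing O] [HenselianLocalRing O] [Algebra k O]
      (K : Type) [Field K] [Algebra O K] [IsFractionRing O K] [Algebra k K]
      [IsScalarTower k O K] (a : M.obj O) (π : O) (_ : Irreducible π)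
      (hu : IsUnit (algebraMap O K π)),
      sym O K (M.res (IsScalarTower.toAlgHom k O K) a) hu.unit =
        M.res (Ideal.Quotient.mkₐ k (IsLocalRing.maximalIdeal O)) a

/-- A local symbol is *strong* if `∂_O` kills the principal units `U_1 = 1 + 𝔪`. -/
def HenselianLocalSymbol.Strong {M : MackeyFunctor k} (d : HenselianLocalSymbol M) : Prop :=
  ∀ (O : Type) [CommRing O] [IsDomain O] [IsDiscreteValuationRing O] [HenselianLocalRing O] [Algebra k O]
    (K : Type) [Field K] [Algebra O K] [IsFractionRing O K] [Algebra k K]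
    [IsScalarTower k O K] (a : M.obj K) (u : Oˣ),
    (u : O) - 1 ∈ IsLocalRing.maximalIdeal O →
      d.sym O K a (Units.map (algebraMap O K : O →* K) u) = 0

end MackeyFunctor

namespace MackeyFunctor

variable {k : Type} [Field k]

/-- `A` is proper: `A(O) → A(K)` is surjective for every `k`-algebra `O` which is a
discrete valuation ring with fraction field `K`. -/
def Proper (M : MackeyFunctor k) : Prop :=
  ∀ (O : Type) [CommRing O] [IsDomain O] [IsDiscreteValuationRing O] [Algebra k O]
    (K : Type) [Field K] [Algebra O K] [IsFractionRing O K] [Algebra k K]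
    [IsScalarTower k O K],
    Function.Surjective (M.res (IsScalarTower.toAlgHom k O K))


section Aux
variable (O : Type) [CommRing O] [IsDomain O] [IsDiscreteValuationRing O]
  (K : Type) [Field K] [Algebra O K] [IsFractionRing O K]

theorem aux_isUnit {π : O} (hπ : Irreducible π) : IsUnit (algebraMap O K π) := by
  rw [isUnit_iff_ne_zero]
  exact fun h => hπ.ne_zero ((map_eq_zero_iff _ (IsFractionRing.injective O K)).mp h)

theorem aux_exists (π : O) (hπ : Irreducible π) (hu : IsUnit (algebraMap O K π)) (x : Kˣ) :
    ∃ n : ℤ, ∃ u : Oˣ, x = hu.unit ^ n * Units.map (algebraMap O K : O →* K) u := by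
  obtain ⟨a, b, hb, hx⟩ := IsFractionRing.div_surjective (A := O) (x : K)
  have hb0 : b ≠ 0 := nonZeroDivisors.ne_zero hb
  have ha0 : a ≠ 0 := by
    rintro rfl
    simp at hx
    exact x.ne_zero hx.symm
  obtain ⟨m1, u1, rfl⟩ := IsDiscreteValuationRing.eq_unit_mul_pow_irreducible ha0 hπ
  obtain ⟨m2, u2, rfl⟩ := IsDiscreteValuationRing.eq_unit_mul_pow_irreducible hb0 hπ
  have hπK : (algebraMap O K π) ≠ 0 := hu.ne_zero
  have hu2 : (algebraMap O K (u2 : O)) ≠ 0 := by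
    simp [map_eq_zero_iff _ (IsFractionRing.injective O K), Units.ne_zero]
  have hinv : (algebraMap O K) ((u2⁻¹ : Oˣ) : O) = (algebraMap O K (u2 : O))⁻¹ := by
    exact eq_inv_of_mul_eq_one_left (by rw [← map_mul]; simp)
  refine ⟨(m1 : ℤ) - m2, u1 * u2⁻¹, Units.ext ?_⟩
  rw [← hx]
  simp only [Units.val_mul, Units.val_zpow_eq_zpow_val, Units.coe_map, MonoidHom.coe_coe,
    IsUnit.unit_spec, map_mul, map_pow, hinv, zpow_sub₀ hπK, zpow_natCast]
  field_simp

theorem aux_unique {π : O} (hπ : Irreducible π) (hu : IsUnit (algebraMap O K π))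
    {n m : ℤ} {u w : Oˣ}
    (h : hu.unit ^ n * Units.map (algebraMap O K : O →* K) u
       = hu.unit ^ m * Units.map (algebraMap O K : O →* K) w) : n = m := by
  have key : ∀ (d : ℕ) (v v' : Oˣ),
      (algebraMap O K π) ^ d * algebraMap O K (v : O) = algebraMap O K (v' : O) → d = 0 := by
    intro d v v' hd
    by_contra hd0
    rw [← map_pow, ← map_mul] at hd
    have := IsFractionRing.injective O K hd
    have hunit : IsUnit (π ^ d) := by
      refine isUnit_of_mul_isUnit_left (y := (v : O)) ?_
      rw [this]; exact v'.isUnit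
    exact hπ.not_isUnit ((isUnit_pow_iff hd0).mp hunit)
  have hπK : (algebraMap O K π) ≠ 0 := hu.ne_zero
  have hK := congrArg (Units.val) h
  simp only [Units.val_mul, Units.val_zpow_eq_zpow_val, Units.coe_map,
    MonoidHom.coe_coe, IsUnit.unit_spec] at hK
  rcases le_total m n with hle | hle
  · have hd : n = m + ((n - m).toNat : ℤ) := by omega
    rw [hd, zpow_add₀ hπK, zpow_natCast, mul_assoc] at hK
    have := mul_left_cancel₀ (zpow_ne_zero m hπK) hK
    have := key (n - m).toNat u w this
    omega
  · have hd : m = n + ((m - n).toNat : ℤ) := by omega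
    rw [hd, zpow_add₀ hπK, zpow_natCast, mul_assoc] at hK
    have := mul_left_cancel₀ (zpow_ne_zero n hπK) hK.symm
    have := key (m - n).toNat w u this
    omega


noncomputable def vA (π : O) (hπ : Irreducible π) (hu : IsUnit (algebraMap O K π)) (x : Kˣ) : ℤ :=
  (aux_exists O K π hπ hu x).choose

theorem vA_spec (π : O) (hπ : Irreducible π) (hu : IsUnit (algebraMap O K π)) (x : Kˣ) :
    ∃ u : Oˣ, x = hu.unit ^ vA O K π hπ hu x * Units.map (algebraMap O K : O →* K) u :=
  (aux_exists O K π hπ hu x).choose_spec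

theorem vA_eq (π : O) (hπ : Irreducible π) (hu : IsUnit (algebraMap O K π)) {n : ℤ} {u : Oˣ}
    {x : Kˣ} (h : x = hu.unit ^ n * Units.map (algebraMap O K : O →* K) u) :
    vA O K π hπ hu x = n := by
  obtain ⟨w, hw⟩ := vA_spec O K π hπ hu x
  exact aux_unique O K hπ hu (hw.symm.trans h)

theorem vA_mul (π : O) (hπ : Irreducible π) (hu : IsUnit (algebraMap O K π)) (x y : Kˣ) :
    vA O K π hπ hu (x * y) = vA O K π hπ hu x + vA O K π hπ hu y := by
  obtain ⟨u, hu1⟩ := vA_spec O K π hπ hu x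
  obtain ⟨w, hw1⟩ := vA_spec O K π hπ hu y
  refine vA_eq O K π hπ hu (u := u * w) ?_
  rw [zpow_add, map_mul, mul_mul_mul_comm, ← hu1, ← hw1]

theorem vA_map (π : O) (hπ : Irreducible π) (hu : IsUnit (algebraMap O K π)) (u : Oˣ) :
    vA O K π hπ hu (Units.map (algebraMap O K : O →* K) u) = 0 :=
  vA_eq O K π hπ hu (n := 0) (u := u) (by rw [zpow_zero, one_mul])

theorem vA_irred (π : O) (hπ : Irreducible π) (hu : IsUnit (algebraMap O K π))
    (π' : O) (hπ' : Irreducible π') (hu' : IsUnit (algebraMap O K π')) (n : ℤ) (u : Oˣ) :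
    vA O K π hπ hu (hu'.unit ^ n * Units.map (algebraMap O K : O →* K) u) = n := by
  obtain ⟨v, hv⟩ := IsDiscreteValuationRing.associated_of_irreducible O hπ hπ'
  have h1 : hu'.unit = hu.unit * Units.map (algebraMap O K : O →* K) v := by
    refine Units.ext ?_
    simp only [Units.val_mul, Units.coe_map, MonoidHom.coe_coe, IsUnit.unit_spec]
    rw [← map_mul, hv]
  refine vA_eq O K π hπ hu (u := v ^ n * u) ?_
  rw [h1, mul_zpow, map_mul, map_zpow, mul_assoc]

end Aux

section AuxSym

variable {k : Type} [Field k]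
variable (M : MackeyFunctor k) (hproper : M.Proper)
variable (O : Type) [CommRing O] [IsDomain O] [IsDiscreteValuationRing O] [Algebra k O]
  (K : Type) [Field K] [Algebra O K] [IsFractionRing O K] [Algebra k K] [IsScalarTower k O K]

noncomputable def thePi : O := (IsDiscreteValuationRing.exists_irreducible O).choose

theorem thePi_irr : Irreducible (thePi O) :=
  (IsDiscreteValuationRing.exists_irreducible O).choose_spec

theorem thePi_unit : IsUnit (algebraMap O K (thePi O)) := aux_isUnit O K (thePi_irr O)

noncomputable def theLift (a : M.obj K) : M.obj O := (hproper O K a).choose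

theorem theLift_spec (a : M.obj K) :
    M.res (IsScalarTower.toAlgHom k O K) (theLift M hproper O K a) = a :=
  (hproper O K a).choose_spec

noncomputable def theSym (a : M.obj K) (x : Kˣ) : M.obj (O ⧸ IsLocalRing.maximalIdeal O) :=
  vA O K (thePi O) (thePi_irr O) (thePi_unit O K) x •
    M.res (Ideal.Quotient.mkₐ k (IsLocalRing.maximalIdeal O)) (theLift M hproper O K a)

end AuxSym

/-- **Local symbols on a proper Mackey functor** (Proposition 5.1).  Let `A` be a proper
Mackey functor.  (1) Any local symbol `∂` on `A` is given by the formula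
`∂_O(a, x) = v(x)·ā` (where `ā` is the reduction of any lift of `a` to `A(O)`), is unique,
and forces the kernel of `A(O) → A(K)` to die in `A(l)`.  (2) Conversely, if for every
henselian `k`-discrete valuation ring `O` the map `Ker(A(O) → A(K)) → A(l)` is zero, then
this formula defines a (strong) local symbol. -/
theorem proper_localSymbol_iff_kernel_vanishes (M : MackeyFunctor k)
    (hM : M.IsMackey) (hproper : M.Proper) :
    (∀ d : M.LocalSymbol,
      (∀ (O : Type) [CommRing O] [IsDomain O] [IsDiscreteValuationRing O] [Algebra k O]
        (K : Type) [Field K] [Algebra O K] [IsFractionRing O K] [Algebra k K]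
        [IsScalarTower k O K] (atilde : M.obj O) (π : O) (_ : Irreducible π)
        (hu : IsUnit (algebraMap O K π)) (n : ℤ) (u : Oˣ),
        d.sym O K (M.res (IsScalarTower.toAlgHom k O K) atilde)
            (hu.unit ^ n * Units.map (algebraMap O K : O →* K) u) =
          n • M.res (Ideal.Quotient.mkₐ k (IsLocalRing.maximalIdeal O)) atilde) ∧
      (∀ (O : Type) [CommRing O] [IsDomain O] [IsDiscreteValuationRing O] [Algebra k O]
        (K : Type) [Field K] [Algebra O K] [IsFractionRing O K] [Algebra k K]
        [IsScalarTower k O K] (b : M.obj O),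
        M.res (IsScalarTower.toAlgHom k O K) b = 0 →
          M.res (Ideal.Quotient.mkₐ k (IsLocalRing.maximalIdeal O)) b = 0) ∧
      (∀ d' : M.LocalSymbol,
        ∀ (O : Type) [CommRing O] [IsDomain O] [IsDiscreteValuationRing O] [Algebra k O]
        (K : Type) [Field K] [Algebra O K] [IsFractionRing O K] [Algebra k K]
        [IsScalarTower k O K] (a : M.obj K) (x : Kˣ),
        d.sym O K a x = d'.sym O K a x)) ∧
    ((∀ (O : Type) [CommRing O] [IsDomain O] [IsDiscreteValuationRing O]
        [HenselianLocalRing O] [Algebra k O]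
        (K : Type) [Field K] [Algebra O K] [IsFractionRing O K] [Algebra k K]
        [IsScalarTower k O K] (b : M.obj O),
        M.res (IsScalarTower.toAlgHom k O K) b = 0 →
          M.res (Ideal.Quotient.mkₐ k (IsLocalRing.maximalIdeal O)) b = 0) →
      ∃ d : M.HenselianLocalSymbol, d.Strong ∧
        ∀ (O : Type) [CommRing O] [IsDomain O] [IsDiscreteValuationRing O]
          [HenselianLocalRing O] [Algebra k O]
          (K : Type) [Field K] [Algebra O K] [IsFractionRing O K] [Algebra k K]
          [IsScalarTower k O K] (atilde : M.obj O) (π : O) (_ : Irreducible π)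
          (hu : IsUnit (algebraMap O K π)) (n : ℤ) (u : Oˣ),
          d.sym O K (M.res (IsScalarTower.toAlgHom k O K) atilde)
              (hu.unit ^ n * Units.map (algebraMap O K : O →* K) u) =
            n • M.res (Ideal.Quotient.mkₐ k (IsLocalRing.maximalIdeal O)) atilde) := by
  classical
  have key : ∀ d : M.LocalSymbol,
      ∀ (O : Type) [CommRing O] [IsDomain O] [IsDiscreteValuationRing O] [Algebra k O]
        (K : Type) [Field K] [Algebra O K] [IsFractionRing O K] [Algebra k K]
        [IsScalarTower k O K] (atilde : M.obj O) (π : O) (_ : Irreducible π)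
        (hu : IsUnit (algebraMap O K π)) (n : ℤ) (u : Oˣ),
        d.sym O K (M.res (IsScalarTower.toAlgHom k O K) atilde)
            (hu.unit ^ n * Units.map (algebraMap O K : O →* K) u) =
          n • M.res (Ideal.Quotient.mkₐ k (IsLocalRing.maximalIdeal O)) atilde := by
    intro d O _ _ _ _ K _ _ _ _ _ atilde π hπ hu n u
    set a := M.res (IsScalarTower.toAlgHom k O K) atilde with ha
    have h1 : d.sym O K a 1 = 0 := by
      have := d.sym_mul O K a 1 1
      rw [one_mul] at this
      exact left_eq_add.mp this
    let g : Kˣ →* Multiplicative (M.obj (O ⧸ IsLocalRing.maximalIdeal O)) :=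
      { toFun := fun x => Multiplicative.ofAdd (d.sym O K a x)
        map_one' := congrArg Multiplicative.ofAdd h1
        map_mul' := fun x y => congrArg Multiplicative.ofAdd (d.sym_mul O K a x y) }
    have hz : d.sym O K a (hu.unit ^ n) = n • d.sym O K a hu.unit := by
      have h2 := congrArg Multiplicative.toAdd (map_zpow g hu.unit n)
      simpa [g, toAdd_zpow] using h2
    rw [d.sym_mul, hz, ha]
    rw [d.sym_unif O K atilde π hπ hu, d.sym_unit O K atilde u, add_zero]
  constructor
  · intro d
    refine ⟨key d, ?_, ?_⟩
    · intro O _ _ _ _ K _ _ _ _ _ b hb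
      obtain ⟨π, hπ⟩ := IsDiscreteValuationRing.exists_irreducible O
      have hu := aux_isUnit O K hπ
      have hk := key d O K b π hπ hu 1 1
      rw [hb] at hk
      have h0 : d.sym O K 0 (hu.unit ^ (1 : ℤ) * Units.map (algebraMap O K : O →* K) 1)
          = 0 := by
        have := d.sym_add O K 0 0 (hu.unit ^ (1 : ℤ) * Units.map (algebraMap O K : O →* K) 1)
        rw [add_zero] at this
        exact left_eq_add.mp this
      rw [h0] at hk
      rw [← one_smul ℤ (M.res (Ideal.Quotient.mkₐ k (IsLocalRing.maximalIdeal O)) b), ← hk]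
    · intro d' O _ _ _ _ K _ _ _ _ _ a x
      obtain ⟨atilde, hat⟩ := hproper O K a
      obtain ⟨π, hπ⟩ := IsDiscreteValuationRing.exists_irreducible O
      have hu := aux_isUnit O K hπ
      obtain ⟨n, u, rfl⟩ := aux_exists O K π hπ hu x
      rw [← hat, key d O K atilde π hπ hu n u, key d' O K atilde π hπ hu n u]
  · intro hker
    have hred : ∀ (O : Type) [CommRing O] [IsDomain O] [IsDiscreteValuationRing O]
        [HenselianLocalRing O] [Algebra k O]
        (K : Type) [Field K] [Algebra O K] [IsFractionRing O K] [Algebra k K]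
        [IsScalarTower k O K] (b c : M.obj O),
        M.res (IsScalarTower.toAlgHom k O K) b = M.res (IsScalarTower.toAlgHom k O K) c →
          M.res (Ideal.Quotient.mkₐ k (IsLocalRing.maximalIdeal O)) b =
            M.res (Ideal.Quotient.mkₐ k (IsLocalRing.maximalIdeal O)) c := by
      intro O _ _ _ _ _ K _ _ _ _ _ b c h
      have h2 := hker O K (b - c) (by rw [map_sub, h, sub_self])
      rw [map_sub, sub_eq_zero] at h2
      exact h2
    refine ⟨⟨fun O _ _ _ _ _ K _ _ _ _ _ a x => theSym M hproper O K a x,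
        ?_, ?_, ?_, ?_, ?_⟩, ?_, ?_⟩
    · -- sym_add
      intro O _ _ _ _ _ K _ _ _ _ _ a b x
      have h := hred O K (theLift M hproper O K (a + b))
        (theLift M hproper O K a + theLift M hproper O K b)
        (by rw [map_add, theLift_spec, theLift_spec, theLift_spec])
      simp only [theSym, h, map_add, smul_add]
    · -- sym_mul
      intro O _ _ _ _ _ K _ _ _ _ _ a x y
      simp only [theSym, vA_mul, add_smul]
    · -- sym_cont
      intro O _ _ _ _ _ K _ _ _ _ _ a
      exact ⟨0, fun u _ => by simp only [theSym, vA_map, zero_smul]⟩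
    · -- sym_unit
      intro O _ _ _ _ _ K _ _ _ _ _ a u
      simp only [theSym, vA_map, zero_smul]
    · -- sym_unif
      intro O _ _ _ _ _ K _ _ _ _ _ a π hπ hu
      have hx : hu.unit = hu.unit ^ (1 : ℤ) * Units.map (algebraMap O K : O →* K) 1 := by
        simp
      have hv : vA O K (thePi O) (thePi_irr O) (thePi_unit O K) hu.unit = 1 := by
        rw [hx]
        exact vA_irred O K (thePi O) (thePi_irr O) (thePi_unit O K) π hπ hu 1 1
      have h := hred O K (theLift M hproper O K (M.res (IsScalarTower.toAlgHom k O K) a)) a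
        (theLift_spec M hproper O K _)
      simp only [theSym, hv, h, one_smul]
    · -- Strong
      intro O _ _ _ _ _ K _ _ _ _ _ a u _
      simp only [theSym, vA_map, zero_smul]
    · -- formula
      intro O _ _ _ _ _ K _ _ _ _ _ atilde π hπ hu n u
      have hv : vA O K (thePi O) (thePi_irr O) (thePi_unit O K)
          (hu.unit ^ n * Units.map (algebraMap O K : O →* K) u) = n :=
        vA_irred O K (thePi O) (thePi_irr O) (thePi_unit O K) π hπ hu n u
      have h := hred O K
        (theLift M hproper O K (M.res (IsScalarTower.toAlgHom k O K) atilde)) atilde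
        (theLift_spec M hproper O K _)
      simp only [theSym, hv, h]

end MackeyFunctor
end
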